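/- Let φ be a k̄-wise uniform density on {-1,1}^n with k̄ even, and let x, y be independent samples from φ. Then Pr[|∑_{i=1}^n x_i y_i| > t√n] ≤ k̄^{k̄/2}/t^{k̄}. -/

import Mathlib

open Finset

noncomputable def sgn (b : Bool) : ℝ := if b then 1 else -1

noncomputable def chi {n : ℕ} (S : Finset (Fin n)) (x : Fin n → Bool) : ℝ :=
  ∏ i ∈ S, sgn (x i)

/-- Expectation under the uniform distribution on `{-1,1}^n`. -/
noncomputable def expect {n : ℕ} (f : (Fin n → Bool) → ℝ) : ℝ :=
  (∑ x : Fin n → Bool, f x) / 2 ^ n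

/-- Fourier coefficient `f̂(S) = E_x[f(x) x^S]`. -/
noncomputable def coeff {n : ℕ} (f : (Fin n → Bool) → ℝ) (S : Finset (Fin n)) : ℝ :=
  expect (fun x => f x * chi S x)

/-- A density function: nonnegative with mean 1 under the uniform measure. -/
def IsDensity {n : ℕ} (φ : (Fin n → Bool) → ℝ) : Prop :=
  (∀ x, 0 ≤ φ x) ∧ expect φ = 1

/-- Total variation distance between densities: `(1/2) E_x |φ - ψ|`. -/
noncomputable def dTV {n : ℕ} (φ ψ : (Fin n → Bool) → ℝ) : ℝ :=
  expect (fun x => |φ x - ψ x|) / 2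

/-- The nonempty sets of size at most `k`. -/
noncomputable def lowSets (n k : ℕ) : Finset (Finset (Fin n)) :=
  Finset.univ.filter fun S => 1 ≤ S.card ∧ S.card ≤ k


lemma evenFiber_step (m n : ℕ) :
    (univ.filter fun f : Fin (2*m+2) → Fin n =>
      ∀ v, Even ((univ.filter fun j => f j = v)).card).card ≤
    ((2*m+1) * n) *
    (univ.filter fun f : Fin (2*m) → Fin n =>
      ∀ v, Even ((univ.filter fun j => f j = v)).card).card := by
  classical
  set P2 := (univ.filter fun f : Fin (2*m) → Fin n =>
      ∀ v, Even ((univ.filter fun j => f j = v)).card) with hP2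
  have hcard : ((univ : Finset (Fin (2*m+1))) ×ˢ (univ : Finset (Fin n)) ×ˢ P2).card
      = ((2*m+1) * n) * P2.card := by
    simp [Finset.card_product, mul_assoc]
  rw [← hcard]
  set j0 : (Fin (2*m+2) → Fin n) → Fin (2*m+2) := fun f =>
    if h : (((univ : Finset (Fin (2*m+2))).filter fun i => f i = f 0).erase 0).Nonempty
    then (((univ : Finset (Fin (2*m+2))).filter fun i => f i = f 0).erase 0).min' h
    else 0 with hj0
  have hj0mem : ∀ f : Fin (2*m+2) → Fin n,
      (∀ v, Even (((univ : Finset (Fin (2*m+2))).filter fun j => f j = v)).card) →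
      j0 f ∈ (((univ : Finset (Fin (2*m+2))).filter fun i => f i = f 0).erase 0) := by
    intro f hf
    have hne : (((univ : Finset (Fin (2*m+2))).filter fun i => f i = f 0).erase 0).Nonempty := by
      have h0 : (0 : Fin (2*m+2)) ∈ (univ : Finset (Fin (2*m+2))).filter fun i => f i = f 0 := by
        simp
      rcases hf (f 0) with ⟨c, hc⟩
      have h1 : 1 ≤ ((univ : Finset (Fin (2*m+2))).filter fun i => f i = f 0).card :=
        Finset.card_pos.mpr ⟨0, h0⟩
      rw [← Finset.card_pos, Finset.card_erase_of_mem h0]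
      omega
    simp only [hj0, dif_pos hne]
    exact Finset.min'_mem _ hne
  set j' : (Fin (2*m+2) → Fin n) → Fin (2*m+1) := fun f =>
    ⟨(j0 f).val - 1, by have := (j0 f).isLt; omega⟩ with hj'
  set emb : (Fin (2*m+2) → Fin n) → Fin (2*m) → Fin (2*m+2) := fun f i =>
    ((j' f).succAbove i).succ with hemb
  apply Finset.card_le_card_of_injOn (fun f => (j' f, f 0, fun i => f (emb f i)))
  · -- maps to
    intro f hf
    simp only [Finset.mem_coe, Finset.mem_filter, Finset.mem_univ, true_and] at hf
    have hmem := hj0mem f hf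
    rw [Finset.mem_erase, Finset.mem_filter] at hmem
    obtain ⟨hne0, -, hfj0⟩ := hmem
    have hsucc : Fin.succ (j' f) = j0 f := by
      have : (j0 f).val ≠ 0 := fun hc => hne0 (Fin.ext hc)
      apply Fin.ext
      simp [hj', Fin.val_succ]
      omega
    simp only [Finset.mem_coe, Finset.mem_product, Finset.mem_univ, true_and, hP2, Finset.mem_filter]
    intro w
    have hbij : ((univ : Finset (Fin (2*m))).filter fun i => f (emb f i) = w).card
        = (((univ : Finset (Fin (2*m+2))).filter fun a => f a = w) \ {0, j0 f}).card := by
      apply Finset.card_bij (fun i _ => emb f i)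
      · intro i hi
        simp only [Finset.mem_filter, Finset.mem_univ, true_and] at hi
        simp only [Finset.mem_sdiff, Finset.mem_filter, Finset.mem_univ, true_and,
          Finset.mem_insert, Finset.mem_singleton]
        refine ⟨hi, ?_⟩
        push_neg
        constructor
        · exact Fin.succ_ne_zero _
        · rw [← hsucc]
          intro h
          exact Fin.succAbove_ne (j' f) i (Fin.succ_injective _ h)
      · intro i₁ h₁ i₂ h₂ h
        exact Fin.succAbove_right_injective (Fin.succ_injective _ h)
      · intro a ha
        simp only [Finset.mem_sdiff, Finset.mem_filter, Finset.mem_univ, true_and,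
          Finset.mem_insert, Finset.mem_singleton] at ha
        push_neg at ha
        obtain ⟨hfa, ha0, haj⟩ := ha
        obtain ⟨a0, rfl⟩ := Fin.exists_succ_eq.mpr ha0
        have : a0 ≠ j' f := fun hc => haj (by rw [← hsucc, hc])
        obtain ⟨i, hi⟩ := Fin.exists_succAbove_eq this
        refine ⟨i, by simp [hemb, hi, hfa], by simp [hemb, hi]⟩
    rw [hbij]
    have hkey := Finset.card_sdiff_add_card_inter
      ((univ : Finset (Fin (2*m+2))).filter fun a => f a = w) {0, j0 f}
    have hinter : (((univ : Finset (Fin (2*m+2))).filter fun a => f a = w) ∩ {0, j0 f}).card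
        = if w = f 0 then 2 else 0 := by
      split_ifs with hw
      · subst hw
        have : ((univ : Finset (Fin (2*m+2))).filter fun a => f a = f 0) ∩ {0, j0 f}
            = {0, j0 f} := by
          apply Finset.inter_eq_right.mpr
          intro a ha
          simp only [Finset.mem_insert, Finset.mem_singleton] at ha
          rcases ha with rfl | rfl <;> simp [hfj0]
        rw [this, Finset.card_insert_of_notMem (by simp [Ne.symm hne0]), Finset.card_singleton]
      · have : ((univ : Finset (Fin (2*m+2))).filter fun a => f a = w) ∩ {0, j0 f} = ∅ := by
          apply Finset.eq_empty_of_forall_notMem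
          intro a ha
          simp only [Finset.mem_inter, Finset.mem_filter, Finset.mem_univ, true_and,
            Finset.mem_insert, Finset.mem_singleton] at ha
          obtain ⟨hfa, ha⟩ := ha
          rcases ha with rfl | rfl
          · exact hw hfa.symm
          · exact hw (by rw [← hfa, hfj0])
        simp [this]
    rcases hf w with ⟨c, hc⟩
    split_ifs at hinter with hw
    · refine ⟨c - 1, ?_⟩
      omega
    · refine ⟨c, ?_⟩
      omega
  · -- injective
    intro f₁ h₁ f₂ h₂ heq
    simp only [Finset.mem_coe, Finset.mem_filter, Finset.mem_univ, true_and] at h₁ h₂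
    have hje : j' f₁ = j' f₂ := (Prod.ext_iff.mp heq).1
    have hrest := (Prod.ext_iff.mp heq).2
    have h0e : f₁ 0 = f₂ 0 := (Prod.ext_iff.mp hrest).1
    have hge : (fun i => f₁ (emb f₁ i)) = fun i => f₂ (emb f₂ i) :=
      (Prod.ext_iff.mp hrest).2
    have hm₁ := hj0mem f₁ h₁
    have hm₂ := hj0mem f₂ h₂
    rw [Finset.mem_erase, Finset.mem_filter] at hm₁ hm₂
    obtain ⟨hne1, -, hfj1⟩ := hm₁
    obtain ⟨hne2, -, hfj2⟩ := hm₂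
    have hsucc1 : Fin.succ (j' f₁) = j0 f₁ := by
      have : (j0 f₁).val ≠ 0 := fun hc => hne1 (Fin.ext hc)
      apply Fin.ext; simp [hj', Fin.val_succ]; omega
    have hsucc2 : Fin.succ (j' f₂) = j0 f₂ := by
      have : (j0 f₂).val ≠ 0 := fun hc => hne2 (Fin.ext hc)
      apply Fin.ext; simp [hj', Fin.val_succ]; omega
    have hj0eq : j0 f₁ = j0 f₂ := by rw [← hsucc1, ← hsucc2, hje]
    funext a
    by_cases ha0 : a = 0
    · rw [ha0]; exact h0e
    by_cases haj : a = j0 f₁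
    · rw [haj, hfj1, h0e, hj0eq, hfj2]
    · obtain ⟨a0, rfl⟩ := Fin.exists_succ_eq.mpr ha0
      have : a0 ≠ j' f₁ := fun hc => haj (by rw [← hsucc1, hc])
      obtain ⟨i, hi⟩ := Fin.exists_succAbove_eq this
      have e1 : emb f₁ i = a0.succ := by simp [hemb, hi]
      have e2 : emb f₂ i = a0.succ := by simp [hemb, ← hje, hi]
      calc f₁ a0.succ = f₁ (emb f₁ i) := by rw [e1]
        _ = f₂ (emb f₂ i) := congrFun hge i
        _ = f₂ a0.succ := by rw [e2]

lemma evenFiber_card (m n : ℕ) :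
    (univ.filter fun f : Fin (2*m) → Fin n =>
      ∀ v, Even ((univ.filter fun j => f j = v)).card).card ≤ (2*m*n)^m := by
  induction m with
  | zero =>
    simp only [Nat.mul_zero, pow_zero, Nat.zero_mul]
    exact le_trans (Finset.card_filter_le _ _) (by simp)
  | succ m ih =>
    have hstep := evenFiber_step m n
    have hthis : (univ.filter fun f : Fin (2*(m+1)) → Fin n =>
        ∀ v, Even ((univ.filter fun j => f j = v)).card).card
        = (univ.filter fun f : Fin (2*m+2) → Fin n =>
        ∀ v, Even ((univ.filter fun j => f j = v)).card).card := rfl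
    rw [hthis]
    have h1 : ((2*m+1) * n) * (univ.filter fun f : Fin (2*m) → Fin n =>
          ∀ v, Even ((univ.filter fun j => f j = v)).card).card
        ≤ ((2*m+1) * n) * (2*m*n)^m := Nat.mul_le_mul le_rfl ih
    have ha : (2*m+1) * n ≤ 2*(m+1)*n := Nat.mul_le_mul (by clear * -; omega) (le_refl n)
    have hb : (2*m*n)^m ≤ (2*(m+1)*n)^m :=
      Nat.pow_le_pow_left (Nat.mul_le_mul (by clear * -; omega) (le_refl n)) m
    have h2 : ((2*m+1) * n) * (2*m*n)^m ≤ (2*(m+1)*n) * (2*(m+1)*n)^m :=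
      Nat.mul_le_mul ha hb
    have h3 : (2*(m+1)*n) * (2*(m+1)*n)^m = (2*(m+1)*n)^(m+1) := (pow_succ' _ _).symm
    exact le_trans hstep (le_trans h1 (le_trans h2 (le_of_eq h3)))

lemma sgn_pow (b : Bool) (c : ℕ) : sgn b ^ c = if Even c then 1 else sgn b := by
  cases b <;> simp only [sgn, if_true, if_false, one_pow]
  · rcases Nat.even_or_odd c with h | h
    · simp [h, h.neg_one_pow]
    · simp [Nat.not_even_iff_odd.mpr h, h.neg_one_pow]
  · simp

lemma prod_sgn_comp {n kb : ℕ} (x : Fin n → Bool) (p : Fin kb → Fin n) :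
    ∏ j, sgn (x (p j)) =
    chi (univ.filter fun v => ¬ Even ((univ.filter fun j => p j = v)).card) x := by
  classical
  rw [Finset.prod_comp (fun v => sgn (x v)) p]
  have hext : ∏ v ∈ (univ : Finset (Fin kb)).image p,
        sgn (x v) ^ ((univ.filter fun j => p j = v)).card
      = ∏ v : Fin n, sgn (x v) ^ ((univ.filter fun j => p j = v)).card := by
    apply Finset.prod_subset (Finset.subset_univ _)
    intro v _ hv
    have : (univ.filter fun j => p j = v) = ∅ := by
      apply Finset.eq_empty_of_forall_notMem
      intro j hj
      simp only [Finset.mem_filter, Finset.mem_univ, true_and] at hj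
      exact hv (Finset.mem_image.mpr ⟨j, Finset.mem_univ _, hj⟩)
    rw [this]
    simp
  rw [hext, chi, Finset.prod_filter]
  apply Finset.prod_congr rfl
  intro v _
  rw [sgn_pow]
  by_cases h : Even ((univ.filter fun j => p j = v)).card <;> simp [h]

lemma expand {n kb : ℕ} (φ : (Fin n → Bool) → ℝ) :
    ∑ x : Fin n → Bool, ∑ y : Fin n → Bool,
      φ x * φ y * (∑ i, sgn (x i) * sgn (y i))^kb
    = ∑ p : Fin kb → Fin n,
        (∑ x : Fin n → Bool,
          φ x * chi (univ.filter fun v => ¬ Even ((univ.filter fun j => p j = v)).card) x) *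
        (∑ y : Fin n → Bool,
          φ y * chi (univ.filter fun v => ¬ Even ((univ.filter fun j => p j = v)).card) y) := by
  classical
  have hpow : ∀ x y : Fin n → Bool,
      (∑ i, sgn (x i) * sgn (y i))^kb
      = ∑ p : Fin kb → Fin n,
          chi (univ.filter fun v => ¬ Even ((univ.filter fun j => p j = v)).card) x *
          chi (univ.filter fun v => ¬ Even ((univ.filter fun j => p j = v)).card) y := by
    intro x y
    rw [Finset.sum_pow' univ (fun i => sgn (x i) * sgn (y i)) kb]
    rw [Fintype.piFinset_univ]
    apply Finset.sum_congr rfl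
    intro p _
    rw [Finset.prod_mul_distrib, prod_sgn_comp x p, prod_sgn_comp y p]
  calc ∑ x : Fin n → Bool, ∑ y : Fin n → Bool,
        φ x * φ y * (∑ i, sgn (x i) * sgn (y i))^kb
      = ∑ x : Fin n → Bool, ∑ y : Fin n → Bool, ∑ p : Fin kb → Fin n,
          (φ x * chi (univ.filter fun v => ¬ Even ((univ.filter fun j => p j = v)).card) x) *
          (φ y * chi (univ.filter fun v => ¬ Even ((univ.filter fun j => p j = v)).card) y) := by
        apply Finset.sum_congr rfl; intro x _
        apply Finset.sum_congr rfl; intro y _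
        rw [hpow x y, Finset.mul_sum]
        apply Finset.sum_congr rfl; intro p _
        ring
    _ = ∑ p : Fin kb → Fin n, ∑ x : Fin n → Bool, ∑ y : Fin n → Bool,
          (φ x * chi (univ.filter fun v => ¬ Even ((univ.filter fun j => p j = v)).card) x) *
          (φ y * chi (univ.filter fun v => ¬ Even ((univ.filter fun j => p j = v)).card) y) := by
        have : ∀ x : Fin n → Bool, ∑ y : Fin n → Bool, ∑ p : Fin kb → Fin n,
            (φ x * chi (univ.filter fun v => ¬ Even ((univ.filter fun j => p j = v)).card) x) *
            (φ y * chi (univ.filter fun v => ¬ Even ((univ.filter fun j => p j = v)).card) y)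
            = ∑ p : Fin kb → Fin n, ∑ y : Fin n → Bool,
            (φ x * chi (univ.filter fun v => ¬ Even ((univ.filter fun j => p j = v)).card) x) *
            (φ y * chi (univ.filter fun v => ¬ Even ((univ.filter fun j => p j = v)).card) y) :=
          fun x => Finset.sum_comm
        simp only [this]
        rw [Finset.sum_comm]
    _ = _ := by
        apply Finset.sum_congr rfl; intro p _
        rw [Finset.sum_mul_sum]

lemma eval_sum {n kb : ℕ} (φ : (Fin n → Bool) → ℝ) (hφ : IsDensity φ)
    (hkw : ∀ S ∈ lowSets n kb, coeff φ S = 0) :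
    ∑ p : Fin kb → Fin n,
        (∑ x : Fin n → Bool,
          φ x * chi (univ.filter fun v => ¬ Even ((univ.filter fun j => p j = v)).card) x) *
        (∑ y : Fin n → Bool,
          φ y * chi (univ.filter fun v => ¬ Even ((univ.filter fun j => p j = v)).card) y)
    = ((univ.filter fun p : Fin kb → Fin n =>
          ∀ v, Even ((univ.filter fun j => p j = v)).card).card : ℝ) * (2^n)^2 := by
  classical
  have hsumφ : ∑ x : Fin n → Bool, φ x = 2^n := by
    have h := hφ.2
    have h' : (∑ x : Fin n → Bool, φ x) / 2 ^ n = 1 := h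
    rw [div_eq_one_iff_eq (by positivity : ((2:ℝ)^n) ≠ 0)] at h'
    exact h'
  rw [← Finset.sum_filter_add_sum_filter_not univ
    (fun p : Fin kb → Fin n => ∀ v, Even ((univ.filter fun j => p j = v)).card)]
  have h1 : ∀ p ∈ (univ.filter fun p : Fin kb → Fin n =>
      ∀ v, Even ((univ.filter fun j => p j = v)).card),
      (∑ x : Fin n → Bool,
          φ x * chi (univ.filter fun v => ¬ Even ((univ.filter fun j => p j = v)).card) x) *
        (∑ y : Fin n → Bool,
          φ y * chi (univ.filter fun v => ¬ Even ((univ.filter fun j => p j = v)).card) y)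
      = (2:ℝ)^n * 2^n := by
    intro p hp
    simp only [Finset.mem_filter, Finset.mem_univ, true_and] at hp
    have hS : (univ.filter fun v => ¬ Even ((univ.filter fun j => p j = v)).card) = ∅ := by
      apply Finset.eq_empty_of_forall_notMem
      intro v hv
      simp only [Finset.mem_filter, Finset.mem_univ, true_and] at hv
      exact hv (hp v)
    rw [hS]
    simp only [chi, Finset.prod_empty, mul_one, hsumφ]
  have h2 : ∀ p ∈ (univ.filter fun p : Fin kb → Fin n =>
      ¬ ∀ v, Even ((univ.filter fun j => p j = v)).card),
      (∑ x : Fin n → Bool,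
          φ x * chi (univ.filter fun v => ¬ Even ((univ.filter fun j => p j = v)).card) x) *
        (∑ y : Fin n → Bool,
          φ y * chi (univ.filter fun v => ¬ Even ((univ.filter fun j => p j = v)).card) y)
      = 0 := by
    intro p hp
    simp only [Finset.mem_filter, Finset.mem_univ, true_and] at hp
    push_neg at hp
    obtain ⟨v0, hv0⟩ := hp
    set S := (univ.filter fun v => ¬ Even ((univ.filter fun j => p j = v)).card) with hSdef
    have hv0S : v0 ∈ S := Finset.mem_filter.mpr ⟨Finset.mem_univ _, hv0⟩
    have hcard1 : 1 ≤ S.card := Finset.card_pos.mpr ⟨v0, hv0S⟩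
    have hsub : S ⊆ (univ : Finset (Fin kb)).image p := by
      intro v hv
      simp only [hSdef, Finset.mem_filter, Finset.mem_univ, true_and] at hv
      have hcne : ((univ.filter fun j => p j = v)).card ≠ 0 := by
        intro h
        exact hv (h ▸ Even.zero)
      have : ((univ.filter fun j => p j = v)).Nonempty := by
        rw [← Finset.card_pos]; omega
      obtain ⟨j, hj⟩ := this
      simp only [Finset.mem_filter, Finset.mem_univ, true_and] at hj
      exact Finset.mem_image.mpr ⟨j, Finset.mem_univ _, hj⟩
    have hcardk : S.card ≤ kb := by
      calc S.card ≤ ((univ : Finset (Fin kb)).image p).card := Finset.card_le_card hsub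
        _ ≤ (univ : Finset (Fin kb)).card := Finset.card_image_le
        _ = kb := by simp
    have hmem : S ∈ lowSets n kb := by
      simp only [lowSets, Finset.mem_filter, Finset.mem_univ, true_and]
      exact ⟨hcard1, hcardk⟩
    have hc := hkw S hmem
    have hc' : (∑ x : Fin n → Bool, φ x * chi S x) / 2 ^ n = 0 := hc
    rw [div_eq_zero_iff] at hc'
    have hzero : ∑ x : Fin n → Bool, φ x * chi S x = 0 := by
      rcases hc' with h | h
      · exact h
      · exact absurd h (by positivity)
    rw [hzero, zero_mul]
  rw [Finset.sum_congr rfl h1, Finset.sum_congr rfl h2]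
  rw [Finset.sum_const, Finset.sum_const]
  simp only [smul_zero, add_zero, nsmul_eq_mul]
  ring

theorem stmt16 {n kb : ℕ} (hke : Even kb) (φ : (Fin n → Bool) → ℝ)
    (hφ : IsDensity φ) (hkw : ∀ S ∈ lowSets n kb, coeff φ S = 0)
    (t : ℝ) (ht : 0 < t) :
    (∑ x : Fin n → Bool, ∑ y : Fin n → Bool, φ x * φ y *
        (if t * Real.sqrt n < |∑ i, sgn (x i) * sgn (y i)| then 1 else 0)) /
      (2 : ℝ) ^ (2 * n) ≤ (kb : ℝ) ^ (kb / 2) / t ^ kb := by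
  classical
  obtain ⟨m, hm⟩ := hke
  have hkb : kb = 2*m := by omega
  have hke' : Even kb := ⟨m, hm⟩
  rcases Nat.eq_zero_or_pos n with hn | hn
  · subst hn
    have hz : ∀ x y : Fin 0 → Bool,
        φ x * φ y * (if t * Real.sqrt (0:ℕ) < |∑ i : Fin 0, sgn (x i) * sgn (y i)| then (1:ℝ) else 0) = 0 := by
      intro x y
      simp
    rw [Finset.sum_congr rfl fun x _ => Finset.sum_congr rfl fun y _ => hz x y]
    simp only [Finset.sum_const_zero, zero_div]
    positivity
  · set c := t * Real.sqrt n with hc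
    have hsq : Real.sqrt n > 0 := Real.sqrt_pos.mpr (by exact_mod_cast hn)
    have hcpos : 0 < c := mul_pos ht hsq
    set P := (univ.filter fun p : Fin kb → Fin n =>
        ∀ v, Even ((univ.filter fun j => p j = v)).card) with hP
    have hterm : ∀ x y : Fin n → Bool,
        φ x * φ y * (if c < |∑ i, sgn (x i) * sgn (y i)| then (1:ℝ) else 0)
        ≤ φ x * φ y * ((∑ i, sgn (x i) * sgn (y i))^kb / c^kb) := by
      intro x y
      apply mul_le_mul_of_nonneg_left _ (mul_nonneg (hφ.1 x) (hφ.1 y))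
      split_ifs with h
      · rw [le_div_iff₀ (by positivity)]
        rw [one_mul]
        calc c^kb ≤ |∑ i, sgn (x i) * sgn (y i)|^kb :=
              pow_le_pow_left₀ hcpos.le h.le kb
          _ = _ := hke'.pow_abs _
      · exact div_nonneg (hke'.pow_nonneg _) (by positivity)
    have hsum : (∑ x : Fin n → Bool, ∑ y : Fin n → Bool,
          φ x * φ y * (if c < |∑ i, sgn (x i) * sgn (y i)| then (1:ℝ) else 0))
        ≤ ∑ x : Fin n → Bool, ∑ y : Fin n → Bool,
          φ x * φ y * ((∑ i, sgn (x i) * sgn (y i))^kb / c^kb) :=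
      Finset.sum_le_sum fun x _ => Finset.sum_le_sum fun y _ => hterm x y
    have hexp : ∑ x : Fin n → Bool, ∑ y : Fin n → Bool,
          φ x * φ y * ((∑ i, sgn (x i) * sgn (y i))^kb / c^kb)
        = ((P.card : ℝ) * (2^n)^2) / c^kb := by
      have : ∀ x y : Fin n → Bool,
          φ x * φ y * ((∑ i, sgn (x i) * sgn (y i))^kb / c^kb)
          = (φ x * φ y * (∑ i, sgn (x i) * sgn (y i))^kb) / c^kb := by
        intro x y; ring
      rw [Finset.sum_congr rfl fun x _ => Finset.sum_congr rfl fun y _ => this x y]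
      rw [Finset.sum_congr rfl fun x (_ : x ∈ univ) => (Finset.sum_div _ _ _).symm]
      rw [← Finset.sum_div]
      rw [expand φ, eval_sum φ hφ hkw]
    have hnum : (∑ x : Fin n → Bool, ∑ y : Fin n → Bool,
          φ x * φ y * (if c < |∑ i, sgn (x i) * sgn (y i)| then (1:ℝ) else 0))
        ≤ ((P.card : ℝ) * (2^n)^2) / c^kb := hexp ▸ hsum
    have hmain : (∑ x : Fin n → Bool, ∑ y : Fin n → Bool,
          φ x * φ y * (if c < |∑ i, sgn (x i) * sgn (y i)| then (1:ℝ) else 0)) / 2^(2*n)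
        ≤ (P.card : ℝ) / c^kb := by
      have h2 : (((P.card : ℝ) * (2^n)^2) / c^kb) / 2^(2*n) = (P.card : ℝ) / c^kb := by
        have hc0 : c ≠ 0 := ne_of_gt hcpos
        field_simp
        ring
      rw [← h2]
      exact div_le_div_of_nonneg_right hnum (by positivity) |>.trans_eq rfl
    refine le_trans hmain ?_
    -- bound P.card and simplify c^kb
    have hcount : (P.card : ℝ) ≤ ((kb : ℝ) * n)^m := by
      have h := evenFiber_card m n
      rw [hP, hkb]
      have := (Nat.cast_le (α := ℝ)).mpr h
      refine le_trans this ?_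
      push_cast
      ring_nf
      exact le_of_eq (by ring)
    have hck : c^kb = t^kb * (n:ℝ)^m := by
      rw [hc, mul_pow, hkb]
      congr 1
      rw [pow_mul (Real.sqrt n) 2 m]
      rw [Real.sq_sqrt (by positivity : (0:ℝ) ≤ (n:ℝ))]
    rw [hck]
    have hnm : (0:ℝ) < (n:ℝ)^m := by positivity
    have hkb2 : kb / 2 = m := by omega
    rw [hkb2]
    calc (P.card : ℝ) / (t^kb * (n:ℝ)^m)
        ≤ ((kb:ℝ) * n)^m / (t^kb * (n:ℝ)^m) := by
          exact div_le_div_of_nonneg_right hcount (by positivity)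
      _ = (kb:ℝ)^m / t^kb := by
          rw [mul_pow]
          field_simp
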